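/- For the (α,α) composition structure, the composition probability function p°_{α,α}(λ_1,...,λ_k) = f°(λ°) α^k ∏_{j=1}^k (1−α)_{λ_j − 1} / (α)_n, with f°(λ°) = n!/(λ_1!···λ_k!), is a symmetric function of (λ_1,...,λ_k) for each fixed k, and summing over all compositions of n gives total probability 1. -/

import Mathlib

/-- Rising factorial `(z)_k = z (z+1) ⋯ (z+k-1)`. -/
noncomputable def rpoch (z : ℝ) (k : ℕ) : ℝ := ∏ i ∈ Finset.range k, (z + i)

lemma rpoch_zero (z : ℝ) : rpoch z 0 = 1 := by simp [rpoch]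

lemma rpoch_succ (z : ℝ) (k : ℕ) : rpoch z (k+1) = rpoch z k * (z + k) := by
  simp [rpoch, Finset.prod_range_succ]

lemma rpoch_succ_left (z : ℝ) (k : ℕ) : rpoch z (k+1) = z * rpoch (z+1) k := by
  simp only [rpoch, Finset.prod_range_succ']
  rw [mul_comm]
  congr 1
  · simp
  · exact Finset.prod_congr rfl (fun x _ => by push_cast; ring)

lemma rpoch_pos {z : ℝ} (hz : 0 < z) (k : ℕ) : 0 < rpoch z k := by
  apply Finset.prod_pos
  intro i _
  positivity

lemma rpoch_vandermonde (a b : ℝ) : ∀ n : ℕ,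
    ∑ m ∈ Finset.range (n+1), (n.choose m : ℝ) * rpoch a m * rpoch b (n - m)
      = rpoch (a + b) n := by
  intro n
  induction n with
  | zero => simp [rpoch_zero]
  | succ n ih =>
    have key : ∀ m ∈ Finset.range (n+1),
        (n.choose m : ℝ) * rpoch a m * rpoch b (n - m) * (a + b + n)
          = (n.choose m : ℝ) * rpoch a (m+1) * rpoch b (n - m)
            + (n.choose m : ℝ) * rpoch a m * rpoch b (n - m + 1) := by
      intro m hm
      rw [Finset.mem_range] at hm
      have hmn : m ≤ n := Nat.lt_succ_iff.mp hm
      rw [rpoch_succ, rpoch_succ]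
      have : (a + b + n) = (a + m) + (b + (n - m : ℕ)) := by
        have : ((n - m : ℕ) : ℝ) = (n : ℝ) - m := by
          push_cast [hmn]; ring
        rw [this]; ring
      rw [this]; ring
    rw [rpoch_succ, ← ih, Finset.sum_mul, Finset.sum_congr rfl key, Finset.sum_add_distrib]
    have h0 : ∀ m ∈ Finset.range (n+1),
        (((n+1).choose (m+1) : ℕ) : ℝ) * rpoch a (m+1) * rpoch b (n+1-(m+1))
          = (n.choose m : ℝ) * rpoch a (m+1) * rpoch b (n - m)
            + (n.choose (m+1) : ℝ) * rpoch a (m+1) * rpoch b (n - m) := by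
      intro m hm
      rw [Nat.choose_succ_succ n m, show n+1-(m+1) = n-m from by omega]
      push_cast; ring
    rw [Finset.sum_range_succ'
        (fun m => (((n+1).choose m : ℕ) : ℝ) * rpoch a m * rpoch b (n+1-m)) (n+1),
      Finset.sum_congr rfl h0, Finset.sum_add_distrib, add_assoc]
    congr 1
    rw [Finset.sum_range_succ
        (fun m => ((n.choose (m+1) : ℕ) : ℝ) * rpoch a (m+1) * rpoch b (n - m)),
      Nat.choose_succ_self]
    rw [Finset.sum_range_succ'
        (fun m => ((n.choose m : ℕ) : ℝ) * rpoch a m * rpoch b (n - m + 1)) n]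
    simp only [Nat.cast_zero, zero_mul, add_zero, Nat.choose_zero_right, Nat.cast_one,
      one_mul, rpoch_zero, Nat.sub_zero, Nat.add_sub_cancel]
    congr 1
    exact Finset.sum_congr rfl (fun m hm => by
      rw [Finset.mem_range] at hm
      rw [show n - (m+1) + 1 = n - m from by omega])

lemma key_identity (α : ℝ) (n : ℕ) :
    ∑ m ∈ Finset.range (n+1),
        (((n+1).choose (m+1) : ℕ) : ℝ) * (α * rpoch (1-α) m) * rpoch α (n - m)
      = rpoch α (n+1) := by
  have hneg : ∀ m : ℕ, α * rpoch (1-α) m = -rpoch (-α) (m+1) := by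
    intro m
    rw [rpoch_succ_left]
    rw [show -α + 1 = 1 - α from by ring]
    ring
  have hV := rpoch_vandermonde (-α) α (n+1)
  rw [show -α + α = 0 from by ring] at hV
  have h00 : rpoch (0 : ℝ) (n+1) = 0 := by
    rw [rpoch_succ_left]; ring
  rw [h00] at hV
  rw [Finset.sum_range_succ'
      (fun m => (((n+1).choose m : ℕ) : ℝ) * rpoch (-α) m * rpoch α (n+1-m)) (n+1)] at hV
  simp only [Nat.choose_zero_right, Nat.cast_one, one_mul, rpoch_zero, Nat.sub_zero] at hV
  have : ∑ m ∈ Finset.range (n+1),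
      (((n+1).choose (m+1) : ℕ) : ℝ) * rpoch (-α) (m+1) * rpoch α (n+1-(m+1))
        = -rpoch α (n+1) := by linarith
  calc ∑ m ∈ Finset.range (n+1),
        (((n+1).choose (m+1) : ℕ) : ℝ) * (α * rpoch (1-α) m) * rpoch α (n - m)
      = -∑ m ∈ Finset.range (n+1),
        (((n+1).choose (m+1) : ℕ) : ℝ) * rpoch (-α) (m+1) * rpoch α (n+1-(m+1)) := by
        rw [← Finset.sum_neg_distrib]
        refine Finset.sum_congr rfl (fun m hm => ?_)
        rw [hneg, show n+1-(m+1) = n - m from by omega]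
        ring
    _ = rpoch α (n+1) := by rw [this]; ring

/-- The `(α,α)` composition probability function
`p°_{α,α}(λ₁,…,λ_k) = f°(λ) α^k ∏_j (1−α)_{λ_j−1} / (α)_n`, where
`f°(λ) = n!/(λ₁!⋯λ_k!)` and `n = λ₁+⋯+λ_k`. -/
noncomputable def pAlphaAlpha (α : ℝ) (l : List ℕ) : ℝ :=
  ((l.sum.factorial : ℝ) / ((l.map Nat.factorial).prod : ℝ)) * α ^ l.length *
    (l.map (fun m => rpoch (1 - α) (m - 1))).prod / rpoch α l.sum

lemma pAlphaAlpha_nil (α : ℝ) : pAlphaAlpha α [] = 1 := by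
  simp [pAlphaAlpha, rpoch_zero]

lemma pAlphaAlpha_cons (α : ℝ) (h0 : 0 < α) (m : ℕ) (l : List ℕ) :
    pAlphaAlpha α ((m+1) :: l)
      = (((m+1+l.sum).choose (m+1) : ℕ) : ℝ) * (α * rpoch (1-α) m) * rpoch α l.sum
          / rpoch α (m+1+l.sum) * pAlphaAlpha α l := by
  have hP : ((l.map Nat.factorial).prod : ℝ) ≠ 0 := by
    have : (l.map Nat.factorial).prod ≠ 0 := by
      apply List.prod_ne_zero
      simp only [List.mem_map, not_exists]
      rintro x ⟨hx, hfac⟩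
      exact (Nat.factorial_ne_zero x) hfac
    exact_mod_cast Nat.cast_ne_zero.mpr this
  have hs : rpoch α l.sum ≠ 0 := ne_of_gt (rpoch_pos h0 _)
  have hns : rpoch α (m+1+l.sum) ≠ 0 := ne_of_gt (rpoch_pos h0 _)
  have hmf : ((m+1).factorial : ℝ) ≠ 0 := Nat.cast_ne_zero.mpr (Nat.factorial_ne_zero _)
  have hsf : ((l.sum.factorial : ℕ) : ℝ) ≠ 0 := Nat.cast_ne_zero.mpr (Nat.factorial_ne_zero _)
  have hch : (((m+1+l.sum).choose (m+1) : ℕ) : ℝ)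
      = ((m+1+l.sum).factorial : ℝ) / (((m+1).factorial : ℝ) * (l.sum.factorial : ℝ)) := by
    rw [Nat.cast_choose ℝ (Nat.le_add_right _ _), Nat.add_sub_cancel_left]
  simp only [pAlphaAlpha, List.sum_cons, List.length_cons, List.map_cons, List.prod_cons,
    Nat.add_sub_cancel, hch]
  push_cast
  push_cast at hP
  field_simp
  have hP' : ((l.map (Nat.cast ∘ Nat.factorial)).prod : ℝ) ≠ 0 := by
    rw [← List.map_map]; exact hP
  ring

lemma blocks_eq_head_tail {n : ℕ} (c : Composition (n+1)) :
    c.blocks = c.blocks.headI :: c.blocks.tail := by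
  cases h : c.blocks with
  | nil =>
    exfalso
    have hs := c.blocks_sum
    rw [h] at hs
    simp at hs
  | cons a t => simp

lemma head_tail_sum {n : ℕ} (c : Composition (n+1)) :
    c.blocks.headI + c.blocks.tail.sum = n + 1 := by
  have h2 : (c.blocks.headI :: c.blocks.tail).sum = n+1 := by
    rw [← blocks_eq_head_tail c]; exact c.blocks_sum
  simpa [List.sum_cons] using h2

lemma headI_pos {n : ℕ} (c : Composition (n+1)) : 0 < c.blocks.headI := by
  apply c.blocks_pos
  rw [blocks_eq_head_tail c]
  exact List.mem_cons_self

/-- The tail of a composition of `n+1`, as a composition. -/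
def compTail {n : ℕ} (c : Composition (n+1)) :
    Composition (n - (c.blocks.headI - 1)) :=
  ⟨c.blocks.tail,
   fun hi => c.blocks_pos (List.mem_of_mem_tail hi),
   by have := head_tail_sum c; have := headI_pos c; omega⟩

lemma sigma_comp_ext {n : ℕ} (x y : Σ m : ℕ, Composition (n - m))
    (h1 : x.1 = y.1) (h2 : x.2.blocks = y.2.blocks) : x = y := by
  rcases x with ⟨a, xa⟩
  rcases y with ⟨b, yb⟩
  dsimp at h1 h2
  subst h1
  rw [Composition.ext h2]

lemma comp_sum_succ (f : List ℕ → ℝ) (n : ℕ) :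
    ∑ c : Composition (n+1), f c.blocks
      = ∑ m ∈ Finset.range (n+1), ∑ d : Composition (n-m), f ((m+1) :: d.blocks) := by
  rw [Finset.sum_sigma' (Finset.range (n+1)) (fun m => (Finset.univ : Finset (Composition (n-m))))
    (fun m d => f ((m+1) :: d.blocks))]
  refine Finset.sum_bij'
    (i := fun (c : Composition (n+1)) _ => (⟨c.blocks.headI - 1, compTail c⟩ : Σ m : ℕ, Composition (n - m)))
    (j := fun x hx => ⟨(x.1+1) :: x.2.blocks,
      fun hi => by
        rcases List.mem_cons.mp hi with h | h
        · omega
        · exact x.2.blocks_pos h,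
      by
        obtain ⟨m, d⟩ := x
        have hm : m < n + 1 := Finset.mem_range.mp (Finset.mem_sigma.mp hx).1
        have hd := d.blocks_sum
        simp only [List.sum_cons]
        omega⟩)
    ?_ ?_ ?_ ?_ ?_
  · intro c _
    rw [Finset.mem_sigma]
    refine ⟨?_, Finset.mem_univ _⟩
    rw [Finset.mem_range]
    show c.blocks.headI - 1 < n + 1
    have := head_tail_sum c
    omega
  · intro x hx
    exact Finset.mem_univ _
  · intro c _
    apply Composition.ext
    simp only
    have h1 := headI_pos c
    rw [show c.blocks.headI - 1 + 1 = c.blocks.headI from by omega]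
    exact (blocks_eq_head_tail c).symm
  · intro x hx
    apply sigma_comp_ext
    · simp [compTail]
    · simp [compTail]
  · intro c _
    congr 1
    have h1 := headI_pos c
    rw [show c.blocks.headI - 1 + 1 = c.blocks.headI from by omega]
    simp only [compTail]
    exact blocks_eq_head_tail c

/-- The `(α,α)` CPF is a symmetric function of the parts (for each fixed number of
parts), and summing it over all compositions of `n` gives total probability `1`. -/
theorem alphaAlpha_symmetric_and_sums_to_one (α : ℝ) (h0 : 0 < α) (h1 : α < 1) :
    (∀ l l' : List ℕ, l.Perm l' → pAlphaAlpha α l = pAlphaAlpha α l') ∧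
    (∀ n : ℕ, 1 ≤ n → ∑ c : Composition n, pAlphaAlpha α c.blocks = 1) := by
  constructor
  · intro l l' hp
    unfold pAlphaAlpha
    rw [hp.sum_eq, hp.length_eq, (hp.map Nat.factorial).prod_eq,
      (hp.map (fun m => rpoch (1 - α) (m - 1))).prod_eq]
  · have main : ∀ n : ℕ, ∑ c : Composition n, pAlphaAlpha α c.blocks = 1 := by
      intro n
      induction n using Nat.strong_induction_on with
      | _ n ih =>
        cases n with
        | zero =>
          have hblk : ∀ c : Composition 0, c.blocks = [] := by
            intro c
            have hs := c.blocks_sum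
            cases h : c.blocks with
            | nil => rfl
            | cons a t =>
              exfalso
              have ha := c.blocks_pos (h ▸ List.mem_cons_self (a := a) (l := t))
              rw [h, List.sum_cons] at hs
              omega
          rw [Finset.sum_congr rfl (fun c _ => by rw [hblk c, pAlphaAlpha_nil])]
          simp [Finset.card_univ, composition_card]
        | succ n =>
          rw [comp_sum_succ (pAlphaAlpha α) n]
          have hNe : rpoch α (n+1) ≠ 0 := ne_of_gt (rpoch_pos h0 _)
          have inner : ∀ m ∈ Finset.range (n+1),
              ∑ d : Composition (n-m), pAlphaAlpha α ((m+1) :: d.blocks)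
                = (((n+1).choose (m+1) : ℕ) : ℝ) * (α * rpoch (1-α) m) * rpoch α (n-m)
                    / rpoch α (n+1) := by
            intro m hm
            rw [Finset.mem_range] at hm
            have hterm : ∀ d : Composition (n-m), pAlphaAlpha α ((m+1) :: d.blocks)
                = (((n+1).choose (m+1) : ℕ) : ℝ) * (α * rpoch (1-α) m) * rpoch α (n-m)
                    / rpoch α (n+1) * pAlphaAlpha α d.blocks := by
              intro d
              rw [pAlphaAlpha_cons α h0 m d.blocks, d.blocks_sum,
                show m+1+(n-m) = n+1 from by omega]
            rw [Finset.sum_congr rfl (fun d _ => hterm d), ← Finset.mul_sum,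
              ih (n-m) (by omega), mul_one]
          rw [Finset.sum_congr rfl inner, ← Finset.sum_div, key_identity, div_self hNe]
    intro n _
    exact main n
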